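/- Let p, q, k, l ∈ ℝ with k ≠ 0, l ≠ 0 and p²(k² + l²) = 1, and let f(x₁) = p x₁ + q. Define φ : ℝ³ → ℝ⁴ by φ(x₁,x₂,x₃) = (k f(x₁) cos(x₂/k), k f(x₁) sin(x₂/k), l f(x₁) cos(x₃/l), l f(x₁) sin(x₃/l)). Then at every point, ⟨∂₁φ, ∂₁φ⟩ = 1, ⟨∂₂φ, ∂₂φ⟩ = f(x₁)², ⟨∂₃φ, ∂₃φ⟩ = f(x₁)², and the mixed inner products ⟨∂₁φ, ∂₂φ⟩, ⟨∂₁φ, ∂₃φ⟩, ⟨∂₂φ, ∂₃φ⟩ all vanish; i.e., φ pulls back the Euclidean metric on ℝ⁴ to dx₁² + f(x₁)²(dx₂² + dx₃²). -/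

import Mathlib

open Matrix Real

theorem flat_fiber_linear_warping_immersion (p q k l : ℝ)
    (hk : k ≠ 0) (hl : l ≠ 0) (h : p ^ 2 * (k ^ 2 + l ^ 2) = 1)
    (f : ℝ → ℝ) (hf : ∀ x, f x = p * x + q)
    (φ : ℝ → ℝ → ℝ → (Fin 4 → ℝ))
    (hφ : ∀ x₁ x₂ x₃, φ x₁ x₂ x₃ =
      ![k * f x₁ * Real.cos (x₂ / k), k * f x₁ * Real.sin (x₂ / k),
        l * f x₁ * Real.cos (x₃ / l), l * f x₁ * Real.sin (x₃ / l)]) :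
    ∀ x₁ x₂ x₃ : ℝ,
      (deriv (fun s => φ s x₂ x₃) x₁) ⬝ᵥ (deriv (fun s => φ s x₂ x₃) x₁) = 1 ∧
      (deriv (fun s => φ x₁ s x₃) x₂) ⬝ᵥ (deriv (fun s => φ x₁ s x₃) x₂) = f x₁ ^ 2 ∧
      (deriv (fun s => φ x₁ x₂ s) x₃) ⬝ᵥ (deriv (fun s => φ x₁ x₂ s) x₃) = f x₁ ^ 2 ∧
      (deriv (fun s => φ s x₂ x₃) x₁) ⬝ᵥ (deriv (fun s => φ x₁ s x₃) x₂) = 0 ∧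
      (deriv (fun s => φ s x₂ x₃) x₁) ⬝ᵥ (deriv (fun s => φ x₁ x₂ s) x₃) = 0 ∧
      (deriv (fun s => φ x₁ s x₃) x₂) ⬝ᵥ (deriv (fun s => φ x₁ x₂ s) x₃) = 0 := by
  have hfe : f = fun x => p * x + q := funext hf
  subst hfe
  have hφe : φ = fun x₁ x₂ x₃ =>
      ![k * (p * x₁ + q) * Real.cos (x₂ / k), k * (p * x₁ + q) * Real.sin (x₂ / k),
        l * (p * x₁ + q) * Real.cos (x₃ / l), l * (p * x₁ + q) * Real.sin (x₃ / l)] := by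
    funext a b c
    exact hφ a b c
  subst hφe
  intro x₁ x₂ x₃
  have hfd : ∀ s : ℝ, HasDerivAt (fun x : ℝ => p * x + q) p s := by
    intro s
    simpa using ((hasDerivAt_id s).const_mul p).add_const q
  -- derivative in x₁
  have h1 : deriv (fun s =>
      (![k * (p * s + q) * Real.cos (x₂ / k), k * (p * s + q) * Real.sin (x₂ / k),
        l * (p * s + q) * Real.cos (x₃ / l), l * (p * s + q) * Real.sin (x₃ / l)] : Fin 4 → ℝ)) x₁ =
      ![k * p * Real.cos (x₂ / k), k * p * Real.sin (x₂ / k),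
        l * p * Real.cos (x₃ / l), l * p * Real.sin (x₃ / l)] := by
    have key : HasDerivAt (fun s : ℝ =>
        (![k * (p * s + q) * Real.cos (x₂ / k), k * (p * s + q) * Real.sin (x₂ / k),
          l * (p * s + q) * Real.cos (x₃ / l), l * (p * s + q) * Real.sin (x₃ / l)] : Fin 4 → ℝ))
        ![k * p * Real.cos (x₂ / k), k * p * Real.sin (x₂ / k),
          l * p * Real.cos (x₃ / l), l * p * Real.sin (x₃ / l)] x₁ := by
      rw [hasDerivAt_pi]
      intro i
      fin_cases i <;>
        · simp only [Matrix.cons_val_zero, Matrix.cons_val_one, Matrix.head_cons,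
            Matrix.cons_val_succ, Fin.mk_zero, Fin.mk_one]
          first
            | simpa [mul_assoc, mul_comm, mul_left_comm] using
                (((hfd x₁).const_mul k).mul_const (Real.cos (x₂ / k)))
            | simpa [mul_assoc, mul_comm, mul_left_comm] using
                (((hfd x₁).const_mul k).mul_const (Real.sin (x₂ / k)))
            | simpa [mul_assoc, mul_comm, mul_left_comm] using
                (((hfd x₁).const_mul l).mul_const (Real.cos (x₃ / l)))
            | simpa [mul_assoc, mul_comm, mul_left_comm] using
                (((hfd x₁).const_mul l).mul_const (Real.sin (x₃ / l)))
    exact key.deriv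
  -- derivative in x₂
  have h2 : deriv (fun s =>
      (![k * (p * x₁ + q) * Real.cos (s / k), k * (p * x₁ + q) * Real.sin (s / k),
        l * (p * x₁ + q) * Real.cos (x₃ / l), l * (p * x₁ + q) * Real.sin (x₃ / l)] : Fin 4 → ℝ)) x₂ =
      ![-((p * x₁ + q) * Real.sin (x₂ / k)), (p * x₁ + q) * Real.cos (x₂ / k), 0, 0] := by
    have hin : HasDerivAt (fun s : ℝ => s / k) (1 / k) x₂ := by
      simpa using (hasDerivAt_id x₂).div_const k
    have hc : HasDerivAt (fun s : ℝ => k * (p * x₁ + q) * Real.cos (s / k))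
        (-((p * x₁ + q) * Real.sin (x₂ / k))) x₂ := by
      have := ((Real.hasDerivAt_cos (x₂ / k)).comp x₂ hin).const_mul (k * (p * x₁ + q))
      refine HasDerivAt.congr_deriv this ?_
      linear_combination (-((p * x₁ + q) * Real.sin (x₂ / k))) * mul_inv_cancel₀ hk
    have hs : HasDerivAt (fun s : ℝ => k * (p * x₁ + q) * Real.sin (s / k))
        ((p * x₁ + q) * Real.cos (x₂ / k)) x₂ := by
      have := ((Real.hasDerivAt_sin (x₂ / k)).comp x₂ hin).const_mul (k * (p * x₁ + q))
      refine HasDerivAt.congr_deriv this ?_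
      linear_combination ((p * x₁ + q) * Real.cos (x₂ / k)) * mul_inv_cancel₀ hk
    have key : HasDerivAt (fun s : ℝ =>
        (![k * (p * x₁ + q) * Real.cos (s / k), k * (p * x₁ + q) * Real.sin (s / k),
          l * (p * x₁ + q) * Real.cos (x₃ / l), l * (p * x₁ + q) * Real.sin (x₃ / l)] : Fin 4 → ℝ))
        ![-((p * x₁ + q) * Real.sin (x₂ / k)), (p * x₁ + q) * Real.cos (x₂ / k), 0, 0] x₂ := by
      rw [hasDerivAt_pi]
      intro i
      fin_cases i <;> simp <;> first
        | exact hc | exact hs | exact hasDerivAt_const _ _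
    exact key.deriv
  -- derivative in x₃
  have h3 : deriv (fun s =>
      (![k * (p * x₁ + q) * Real.cos (x₂ / k), k * (p * x₁ + q) * Real.sin (x₂ / k),
        l * (p * x₁ + q) * Real.cos (s / l), l * (p * x₁ + q) * Real.sin (s / l)] : Fin 4 → ℝ)) x₃ =
      ![0, 0, -((p * x₁ + q) * Real.sin (x₃ / l)), (p * x₁ + q) * Real.cos (x₃ / l)] := by
    have hin : HasDerivAt (fun s : ℝ => s / l) (1 / l) x₃ := by
      simpa using (hasDerivAt_id x₃).div_const l
    have hc : HasDerivAt (fun s : ℝ => l * (p * x₁ + q) * Real.cos (s / l))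
        (-((p * x₁ + q) * Real.sin (x₃ / l))) x₃ := by
      have := ((Real.hasDerivAt_cos (x₃ / l)).comp x₃ hin).const_mul (l * (p * x₁ + q))
      refine HasDerivAt.congr_deriv this ?_
      linear_combination (-((p * x₁ + q) * Real.sin (x₃ / l))) * mul_inv_cancel₀ hl
    have hs : HasDerivAt (fun s : ℝ => l * (p * x₁ + q) * Real.sin (s / l))
        ((p * x₁ + q) * Real.cos (x₃ / l)) x₃ := by
      have := ((Real.hasDerivAt_sin (x₃ / l)).comp x₃ hin).const_mul (l * (p * x₁ + q))
      refine HasDerivAt.congr_deriv this ?_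
      linear_combination ((p * x₁ + q) * Real.cos (x₃ / l)) * mul_inv_cancel₀ hl
    have key : HasDerivAt (fun s : ℝ =>
        (![k * (p * x₁ + q) * Real.cos (x₂ / k), k * (p * x₁ + q) * Real.sin (x₂ / k),
          l * (p * x₁ + q) * Real.cos (s / l), l * (p * x₁ + q) * Real.sin (s / l)] : Fin 4 → ℝ))
        ![0, 0, -((p * x₁ + q) * Real.sin (x₃ / l)), (p * x₁ + q) * Real.cos (x₃ / l)] x₃ := by
      rw [hasDerivAt_pi]
      intro i
      fin_cases i <;> simp <;> first
        | exact hc | exact hs | exact hasDerivAt_const _ _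
    exact key.deriv
  have c2 := Real.sin_sq_add_cos_sq (x₂ / k)
  have c3 := Real.sin_sq_add_cos_sq (x₃ / l)
  refine ⟨?_, ?_, ?_, ?_, ?_, ?_⟩ <;>
    simp only [h1, h2, h3, dotProduct, Fin.sum_univ_four, Matrix.cons_val_zero,
      Matrix.cons_val_one, Matrix.head_cons, Matrix.cons_val_two, Matrix.cons_val_three,
      Matrix.tail_cons]
  · linear_combination k ^ 2 * p ^ 2 * c2 + l ^ 2 * p ^ 2 * c3 + h
  · linear_combination (p * x₁ + q) ^ 2 * c2
  · linear_combination (p * x₁ + q) ^ 2 * c3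
  · ring
  · ring
  · ring
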